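/- Let Λ = (b_{ij})_{i∈I, j∈J} be a (possibly infinite) matrix with nonnegative real entries defining a bounded operator ℓ²(J) → ℓ²(I), and suppose there is a vector t = (t_j)_{j∈J} with strictly positive entries (not necessarily ℓ²) satisfying ΛᵀΛ t = λ^{-1} t entrywise, where 0 < λ. Then ‖Λ‖² ≤ λ^{-1}. -/

import Mathlib

open scoped ENNReal
open MeasureTheory

/-- Cauchy–Schwarz for `ℝ≥0∞`-valued tsums. -/
lemma ennreal_tsum_cs {J : Type*} (g h : J → ℝ≥0∞) :
    (∑' j, g j * h j) ^ 2 ≤ (∑' j, g j ^ 2) * (∑' j, h j ^ 2) := by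
  letI : MeasurableSpace J := ⊤
  have hconj : (2 : ℝ).HolderConjugate 2 := Real.HolderConjugate.two_two
  have H := ENNReal.lintegral_mul_le_Lp_mul_Lq (Measure.count : Measure J) hconj
    measurable_from_top.aemeasurable measurable_from_top.aemeasurable (f := g) (g := h)
  simp only [Pi.mul_apply] at H
  rw [lintegral_count' (f := fun j => g j * h j) measurable_from_top,
    lintegral_count' (f := fun j => g j ^ (2:ℝ)) measurable_from_top,
    lintegral_count' (f := fun j => h j ^ (2:ℝ)) measurable_from_top] at H
  calc (∑' j, g j * h j) ^ 2
      ≤ ((∑' j, g j ^ (2:ℝ)) ^ (1/(2:ℝ)) * (∑' j, h j ^ (2:ℝ)) ^ (1/(2:ℝ))) ^ 2 :=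
        pow_le_pow_left₀ (zero_le) H 2
    _ = (∑' j, g j ^ 2) * (∑' j, h j ^ 2) := by
        rw [mul_pow, ← ENNReal.rpow_two ((_ : ℝ≥0∞) ^ (1/(2:ℝ))),
          ← ENNReal.rpow_two ((_ : ℝ≥0∞) ^ (1/(2:ℝ))), ← ENNReal.rpow_mul, ← ENNReal.rpow_mul]
        norm_num

set_option maxHeartbeats 1600000 in
/-- If a (possibly infinite) nonnegative matrix `b` defines a bounded
operator `T : ℓ²(J) → ℓ²(I)`, and there is an entrywise strictly positive vector `t`
with `ΛᵀΛ t = λ⁻¹ t` entrywise (all sums convergent), then `‖Λ‖² ≤ λ⁻¹`. -/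
theorem stmt3 {I J : Type*} (b : I → J → ℝ) (hb : ∀ i j, 0 ≤ b i j)
    (T : lp (fun _ : J => ℝ) 2 →L[ℝ] lp (fun _ : I => ℝ) 2)
    (hT : ∀ f : lp (fun _ : J => ℝ) 2, ∀ i : I, (T f : ∀ _ : I, ℝ) i = ∑' j, b i j * (f : ∀ _ : J, ℝ) j)
    (t : J → ℝ) (ht : ∀ j, 0 < t j) (lam : ℝ) (hlam : 0 < lam)
    (hsum1 : ∀ i, Summable (fun j => b i j * t j))
    (hsum2 : ∀ j, Summable (fun i => b i j * ∑' j', b i j' * t j'))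
    (heig : ∀ j, ∑' i, b i j * ∑' j', b i j' * t j' = lam⁻¹ * t j) :
    ‖T‖ ^ 2 ≤ lam⁻¹ := by
  have hlaminv : (0:ℝ) ≤ lam⁻¹ := by positivity
  have hp2 : (0:ℝ) < (2 : ℝ≥0∞).toReal := by norm_num
  have key : ∀ f : lp (fun _ : J => ℝ) 2, ‖T f‖ ≤ Real.sqrt lam⁻¹ * ‖f‖ := by
    intro f
    set u : J → ℝ := fun j => (f : ∀ _ : J, ℝ) j with hu
    set g : I → ℝ := fun i => (T f : ∀ _ : I, ℝ) i with hgdef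
    have hg : ∀ i, g i = ∑' j, b i j * u j := fun i => hT f i
    -- ENNReal versions
    set A : I → J → ℝ≥0∞ := fun i j => ENNReal.ofReal (b i j) with hA
    set F : J → ℝ≥0∞ := fun j => ENNReal.ofReal |u j| with hF
    set Tt : J → ℝ≥0∞ := fun j => ENNReal.ofReal (t j) with hTt
    set D : J → ℝ≥0∞ := fun j => ENNReal.ofReal (u j ^ 2 / t j) with hD
    set S : I → ℝ := fun i => ∑' j, b i j * t j with hS
    have hSnn : ∀ i, 0 ≤ S i := fun i => tsum_nonneg fun j => mul_nonneg (hb i j) (ht j).le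
    -- Step 1: pointwise bound
    have step1 : ∀ i, ENNReal.ofReal (g i ^ 2) ≤ (∑' j, A i j * F j) ^ 2 := by
      intro i
      by_cases hsf : Summable fun j => b i j * u j
      · have habs : Summable fun j => b i j * |u j| := by
          have := hsf.abs
          simpa [abs_mul, abs_of_nonneg (hb i _)] using this
        have h1 : |g i| ≤ ∑' j, b i j * |u j| := by
          rw [hg i]
          have hnorm := norm_tsum_le_tsum_norm (f := fun j => b i j * u j)
            (by simpa [Real.norm_eq_abs, abs_mul, abs_of_nonneg (hb i _)] using habs)
          simpa [Real.norm_eq_abs, abs_mul, abs_of_nonneg (hb i _)] using hnorm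
        have h2 : g i ^ 2 ≤ (∑' j, b i j * |u j|) ^ 2 := by
          rw [← sq_abs]
          exact pow_le_pow_left₀ (abs_nonneg _) h1 2
        calc ENNReal.ofReal (g i ^ 2) ≤ ENNReal.ofReal ((∑' j, b i j * |u j|) ^ 2) :=
              ENNReal.ofReal_le_ofReal h2
          _ = (ENNReal.ofReal (∑' j, b i j * |u j|)) ^ 2 :=
              ENNReal.ofReal_pow (tsum_nonneg fun j => mul_nonneg (hb i j) (abs_nonneg _)) 2
          _ = (∑' j, A i j * F j) ^ 2 := by
              rw [ENNReal.ofReal_tsum_of_nonneg (fun j => mul_nonneg (hb i j) (abs_nonneg _)) habs]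
              congr 1
              exact tsum_congr fun j => ENNReal.ofReal_mul (hb i j)
      · have : g i = 0 := by rw [hg i, tsum_eq_zero_of_not_summable hsf]
        simp [this]
    -- Step 2: Cauchy-Schwarz
    have step2 : ∀ i, (∑' j, A i j * F j) ^ 2 ≤ (∑' j, A i j * Tt j) * (∑' j, A i j * D j) := by
      intro i
      have := ennreal_tsum_cs (fun j => (A i j * Tt j) ^ ((1:ℝ)/2))
        (fun j => (A i j * D j) ^ ((1:ℝ)/2))
      have heq : ∀ j, (A i j * Tt j) ^ ((1:ℝ)/2) * (A i j * D j) ^ ((1:ℝ)/2) = A i j * F j := by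
        intro j
        rw [← ENNReal.mul_rpow_of_nonneg _ _ (by norm_num)]
        have hTD : Tt j * D j = F j ^ 2 := by
          rw [hTt, hD, hF, ← ENNReal.ofReal_mul (ht j).le,
            ← ENNReal.ofReal_pow (abs_nonneg _)]
          congr 1
          rw [mul_div_cancel₀ _ (ht j).ne', sq_abs]
        have : A i j * Tt j * (A i j * D j) = (A i j * F j) ^ 2 := by
          rw [mul_pow, ← hTD]; ring
        rw [this, ← ENNReal.rpow_two, ← ENNReal.rpow_mul]
        norm_num
      have hsq : ∀ (x : ℝ≥0∞), (x ^ ((1:ℝ)/2)) ^ 2 = x := by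
        intro x
        rw [← ENNReal.rpow_two, ← ENNReal.rpow_mul]
        norm_num
      simp only [heq, hsq] at this
      exact this
    -- Step 3
    have step3 : ∀ i, (∑' j, A i j * Tt j) = ENNReal.ofReal (S i) := by
      intro i
      rw [hS, ENNReal.ofReal_tsum_of_nonneg (fun j => mul_nonneg (hb i j) (ht j).le) (hsum1 i)]
      exact tsum_congr fun j => (ENNReal.ofReal_mul (hb i j)).symm
    -- Step 4: sum over i
    have step4 : (∑' i, ENNReal.ofReal (S i) * ∑' j, A i j * D j)
        ≤ ENNReal.ofReal lam⁻¹ * ENNReal.ofReal (∑' j, u j ^ 2) := by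
      have swap : (∑' i, ENNReal.ofReal (S i) * ∑' j, A i j * D j)
          = ∑' j, D j * ∑' i, ENNReal.ofReal (b i j * S i) := by
        calc (∑' i, ENNReal.ofReal (S i) * ∑' j, A i j * D j)
            = ∑' i, ∑' j, ENNReal.ofReal (S i) * (A i j * D j) := by
              exact tsum_congr fun i => (ENNReal.tsum_mul_left).symm
          _ = ∑' j, ∑' i, ENNReal.ofReal (S i) * (A i j * D j) := ENNReal.tsum_comm
          _ = ∑' j, D j * ∑' i, ENNReal.ofReal (b i j * S i) := by
              refine tsum_congr fun j => ?_
              calc (∑' i, ENNReal.ofReal (S i) * (A i j * D j))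
                  = ∑' i, D j * ENNReal.ofReal (b i j * S i) := by
                    refine tsum_congr fun i => ?_
                    rw [ENNReal.ofReal_mul (hb i j)]; ring
                _ = D j * ∑' i, ENNReal.ofReal (b i j * S i) := ENNReal.tsum_mul_left
      rw [swap]
      have hval : ∀ j, (∑' i, ENNReal.ofReal (b i j * S i)) = ENNReal.ofReal (lam⁻¹ * t j) := by
        intro j
        rw [← ENNReal.ofReal_tsum_of_nonneg (fun i => mul_nonneg (hb i j) (hSnn i)) (hsum2 j)]
        congr 1
        exact heig j
      calc (∑' j, D j * ∑' i, ENNReal.ofReal (b i j * S i))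
          = ∑' j, ENNReal.ofReal lam⁻¹ * ENNReal.ofReal (u j ^ 2) := by
            refine tsum_congr fun j => ?_
            rw [hval j, hD, ← ENNReal.ofReal_mul (div_nonneg (sq_nonneg _) (ht j).le),
              ← ENNReal.ofReal_mul hlaminv]
            congr 1
            field_simp [(ht j).ne', hlam.ne']
        _ = ENNReal.ofReal lam⁻¹ * ∑' j, ENNReal.ofReal (u j ^ 2) := ENNReal.tsum_mul_left
        _ ≤ ENNReal.ofReal lam⁻¹ * ENNReal.ofReal (∑' j, u j ^ 2) := by
            gcongr
            have husum : Summable fun j => u j ^ 2 := by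
              have := (lp.memℓp f).summable hp2
              simpa [ENNReal.toReal_ofNat, Real.rpow_two, sq_abs] using this
            rw [ENNReal.ofReal_tsum_of_nonneg (fun j => sq_nonneg _) husum]
      -- done
    -- Combine
    have hgsum : Summable fun i => g i ^ 2 := by
      have := (lp.memℓp (T f)).summable hp2
      simpa [ENNReal.toReal_ofNat, Real.rpow_two, sq_abs] using this
    have main : ENNReal.ofReal (∑' i, g i ^ 2) ≤ ENNReal.ofReal (lam⁻¹ * (∑' j, u j ^ 2)) := by
      rw [ENNReal.ofReal_tsum_of_nonneg (fun i => sq_nonneg _) hgsum,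
        ENNReal.ofReal_mul hlaminv]
      calc (∑' i, ENNReal.ofReal (g i ^ 2))
          ≤ ∑' i, (∑' j, A i j * Tt j) * (∑' j, A i j * D j) :=
            ENNReal.tsum_le_tsum fun i => (step1 i).trans (step2 i)
        _ = ∑' i, ENNReal.ofReal (S i) * ∑' j, A i j * D j := by
            exact tsum_congr fun i => by rw [step3 i]
        _ ≤ ENNReal.ofReal lam⁻¹ * ENNReal.ofReal (∑' j, u j ^ 2) := step4
    have hreal : (∑' i, g i ^ 2) ≤ lam⁻¹ * (∑' j, u j ^ 2) := by
      have h2 : (0:ℝ) ≤ lam⁻¹ * (∑' j, u j ^ 2) := by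
        have : (0:ℝ) ≤ ∑' j, u j ^ 2 := tsum_nonneg fun j => sq_nonneg _
        positivity
      exact (ENNReal.ofReal_le_ofReal_iff h2).mp main
    -- norms
    have hTfnorm : ‖T f‖ ^ 2 = ∑' i, g i ^ 2 := by
      have := lp.norm_rpow_eq_tsum hp2 (T f)
      simpa [ENNReal.toReal_ofNat, Real.rpow_two, sq_abs] using this
    have hfnorm : ‖f‖ ^ 2 = ∑' j, u j ^ 2 := by
      have := lp.norm_rpow_eq_tsum hp2 f
      simpa [ENNReal.toReal_ofNat, Real.rpow_two, sq_abs] using this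
    have : ‖T f‖ ^ 2 ≤ lam⁻¹ * ‖f‖ ^ 2 := by rw [hTfnorm, hfnorm]; exact hreal
    calc ‖T f‖ = Real.sqrt (‖T f‖ ^ 2) := by rw [Real.sqrt_sq (norm_nonneg _)]
      _ ≤ Real.sqrt (lam⁻¹ * ‖f‖ ^ 2) := Real.sqrt_le_sqrt this
      _ = Real.sqrt lam⁻¹ * ‖f‖ := by
          rw [Real.sqrt_mul hlaminv, Real.sqrt_sq (norm_nonneg _)]
  have h1 : ‖T‖ ≤ Real.sqrt lam⁻¹ := T.opNorm_le_bound (Real.sqrt_nonneg _) key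
  calc ‖T‖ ^ 2 ≤ Real.sqrt lam⁻¹ ^ 2 := pow_le_pow_left₀ (norm_nonneg _) h1 2
    _ = lam⁻¹ := Real.sq_sqrt hlaminv
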